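/- Let Q⁰, …, Q^N be probability distributions on {0,1}ⁿ arising from measuring a fixed n-qubit (pure, with ancilla) state in N+1 pairwise mutually unbiased bases. Then for any sets L⁰, …, L^N ⊆ {0,1}ⁿ: Σ_{i=0}^{N} Q^i(L^i) ≤ 1 − C(N+1,2) + Σ_{0≤j<k≤N} (1 + √(2^{-n}·|L^j|·|L^k|))². -/

import Mathlib

open scoped BigOperators ComplexInnerProductSpace Matrix

private lemma inner_sum_smul_sum_smul {H : Type*} [NormedAddCommGroup H] [InnerProductSpace ℂ H]
    {ι κ : Type*} (s : Finset ι) (t : Finset κ) (p : ι → ℂ) (q : κ → ℂ) (f : ι → H) (g : κ → H) :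
    (inner ℂ (∑ x ∈ s, p x • f x) (∑ y ∈ t, q y • g y) : ℂ)
      = ∑ x ∈ s, ∑ y ∈ t, (starRingEnd ℂ (p x) * q y) * inner ℂ (f x) (g y) := by
  rw [sum_inner]
  refine Finset.sum_congr rfl fun x _ => ?_
  rw [inner_sum]
  refine Finset.sum_congr rfl fun y _ => ?_
  rw [inner_smul_left, inner_smul_right]
  ring

private lemma count_pairs_fin (m : ℕ) :
    ∑ j : Fin m, ∑ k : Fin m, (if j < k then (1:ℝ) else 0) = (m.choose 2 : ℝ) := by
  have hN : ∑ j : Fin m, ∑ k : Fin m, (if j < k then (1:ℕ) else 0) = m.choose 2 := by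
    rw [Finset.sum_comm]
    have h1 : ∀ k : Fin m, (∑ j : Fin m, if j < k then (1:ℕ) else 0) = (k : ℕ) := by
      intro k
      rw [Finset.sum_boole]
      rw [show (Finset.univ.filter fun j : Fin m => j < k) = Finset.Iio k by ext; simp]
      simp [Fin.card_Iio]
    rw [Finset.sum_congr rfl fun k _ => h1 k]
    rw [Fin.sum_univ_eq_sum_range (fun i => i) m]
    rw [Finset.sum_range_id, Nat.choose_two_right]
  calc ∑ j : Fin m, ∑ k : Fin m, (if j < k then (1:ℝ) else 0)
      = ((∑ j : Fin m, ∑ k : Fin m, (if j < k then (1:ℕ) else 0) : ℕ) : ℝ) := by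
        push_cast; rfl
    _ = _ := by rw [hN]

set_option maxHeartbeats 2000000 in
/-- Generalized uncertainty relation for `N+1` mutually unbiased bases (Theorem 3).

The purified state `ψ = ∑ x, |x⟩ ⊗ v x` (with `v x = α x • φ x`) is a unit vector,
i.e. `∑ x ‖v x‖² = 1`. The `i`-th basis is given by its coordinates in the computational
basis: `b i z x` is the `x`-coordinate of the `z`-th vector of basis `i`; each basis is
orthonormal, and mutual unbiasedness says any two vectors from distinct bases have
squared overlap `2^{-n}`. The distribution obtained by measuring in basis `i` is
`Q^i(z) = ‖∑ x, conj (b i z x) • v x‖²`. -/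
theorem uncertainty_mub {H : Type*} [NormedAddCommGroup H] [InnerProductSpace ℂ H]
    {n N : ℕ} (v : (Fin n → Bool) → H)
    (hv : ∑ x : Fin n → Bool, ‖v x‖ ^ 2 = 1)
    (b : Fin (N + 1) → (Fin n → Bool) → (Fin n → Bool) → ℂ)
    (horth : ∀ i z z', ∑ x : Fin n → Bool, starRingEnd ℂ (b i z x) * b i z' x =
      if z = z' then 1 else 0)
    (hmub : ∀ i j, i ≠ j → ∀ z w,
      ‖∑ x : Fin n → Bool, starRingEnd ℂ (b i z x) * b j w x‖ ^ 2 = ((2 : ℝ) ^ n)⁻¹)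
    (L : Fin (N + 1) → Finset (Fin n → Bool)) :
    ∑ i : Fin (N + 1), ∑ z ∈ L i, ‖∑ x : Fin n → Bool, (starRingEnd ℂ (b i z x)) • v x‖ ^ 2 ≤
      1 - ((N + 1).choose 2 : ℝ) +
        ∑ j : Fin (N + 1), ∑ k : Fin (N + 1), (if j < k then
          (1 + Real.sqrt (((2 : ℝ) ^ n)⁻¹ * (L j).card * (L k).card)) ^ 2 else 0) := by
  classical
  set w : Fin (N+1) → (Fin n → Bool) → H :=
    fun i z => ∑ x : Fin n → Bool, starRingEnd ℂ (b i z x) • v x with hw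
  set A : Fin (N+1) → ℝ := fun i => ∑ z ∈ L i, ‖w i z‖^2 with hA
  set τ : Fin (N+1) → Fin (N+1) → ℝ :=
    fun j k => Real.sqrt (((2:ℝ)^n)⁻¹ * (L j).card * (L k).card) with hτ
  have hwapp : ∀ i z, (∑ x : Fin n → Bool, starRingEnd ℂ (b i z x) • v x) = w i z :=
    fun _ _ => rfl
  have hτapp : ∀ j k, Real.sqrt (((2:ℝ)^n)⁻¹ * (L j).card * (L k).card) = τ j k :=
    fun _ _ => rfl
  simp only [hwapp, hτapp]
  have hAfold : ∀ i, (∑ z ∈ L i, ‖w i z‖^2) = A i := fun _ => rfl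
  -- column orthonormality
  have hcol : ∀ (i : Fin (N+1)) (x x' : Fin n → Bool),
      (∑ z : Fin n → Bool, starRingEnd ℂ (b i z x) * b i z x') = if x = x' then 1 else 0 := by
    intro i x x'
    have hMM : Matrix.of (b i) * (Matrix.of (b i))ᴴ = 1 := by
      ext z z'
      have h := congrArg (starRingEnd ℂ) (horth i z z')
      simp only [map_sum, map_mul, Complex.conj_conj] at h
      rw [Matrix.mul_apply]
      simp only [Matrix.conjTranspose_apply, Matrix.of_apply, Matrix.one_apply, RCLike.star_def]
      rw [h]
      split_ifs <;> simp
    have hNM := mul_eq_one_comm.mp hMM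
    have h2 : ((Matrix.of (b i))ᴴ * Matrix.of (b i)) x x' = (1 : Matrix _ _ ℂ) x x' := by
      rw [hNM]
    simpa [Matrix.mul_apply, Matrix.conjTranspose_apply, Matrix.one_apply] using h2
  -- expansion of inner products against w
  have hwin : ∀ (i : Fin (N+1)) z (u : H),
      (inner ℂ (w i z) u : ℂ) = ∑ x : Fin n → Bool, b i z x * inner ℂ (v x) u := by
    intro i z u
    rw [show w i z = ∑ x : Fin n → Bool, starRingEnd ℂ (b i z x) • v x from rfl]
    simp_rw [sum_inner, inner_smul_left, Complex.conj_conj]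
  -- Parseval: total weight of w equals 1
  have hwtotal : ∀ i : Fin (N+1), ∑ z : Fin n → Bool, ‖w i z‖^2 = 1 := by
    intro i
    have key : ∑ z : Fin n → Bool, (inner ℂ (w i z) (w i z) : ℂ) = 1 := by
      have e1 : ∀ z : Fin n → Bool, (inner ℂ (w i z) (w i z) : ℂ)
          = ∑ x : Fin n → Bool, ∑ x' : Fin n → Bool,
              (b i z x * starRingEnd ℂ (b i z x')) * inner ℂ (v x) (v x') := by
        intro z
        rw [show w i z = ∑ x : Fin n → Bool, starRingEnd ℂ (b i z x) • v x from rfl,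
          inner_sum_smul_sum_smul]
        simp_rw [Complex.conj_conj]
      calc ∑ z : Fin n → Bool, (inner ℂ (w i z) (w i z) : ℂ)
          = ∑ z : Fin n → Bool, ∑ x : Fin n → Bool, ∑ x' : Fin n → Bool,
              (b i z x * starRingEnd ℂ (b i z x')) * inner ℂ (v x) (v x') :=
            Finset.sum_congr rfl fun z _ => e1 z
        _ = ∑ x : Fin n → Bool, ∑ x' : Fin n → Bool,
              (∑ z : Fin n → Bool, b i z x * starRingEnd ℂ (b i z x')) * inner ℂ (v x) (v x') := by
            rw [Finset.sum_comm]
            refine Finset.sum_congr rfl fun x _ => ?_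
            rw [Finset.sum_comm]
            exact Finset.sum_congr rfl fun x' _ => (Finset.sum_mul _ _ _).symm
        _ = ∑ x : Fin n → Bool, ∑ x' : Fin n → Bool,
              (if x = x' then 1 else 0) * (inner ℂ (v x) (v x') : ℂ) := by
            refine Finset.sum_congr rfl fun x _ => Finset.sum_congr rfl fun x' _ => ?_
            congr 1
            have h := congrArg (starRingEnd ℂ) (hcol i x x')
            simp only [map_sum, map_mul, Complex.conj_conj] at h
            rw [h]
            split_ifs <;> simp
        _ = ∑ x : Fin n → Bool, (inner ℂ (v x) (v x) : ℂ) := by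
            refine Finset.sum_congr rfl fun x _ => ?_
            simp [ite_mul]
        _ = 1 := by
            simp_rw [inner_self_eq_norm_sq_to_K]
            norm_cast
            rw [hv]
            norm_num
    simp_rw [inner_self_eq_norm_sq_to_K] at key
    norm_cast at key
    exact Complex.ofReal_injective (key.trans Complex.ofReal_one.symm)
  have hA0 : ∀ i, 0 ≤ A i := fun i => Finset.sum_nonneg fun z _ => by positivity
  have hA1 : ∀ i, A i ≤ 1 := by
    intro i
    rw [← hwtotal i]
    exact Finset.sum_le_sum_of_subset_of_nonneg (Finset.subset_univ _)
      (fun z _ _ => by positivity)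
  -- the purified state and projected vectors in `PiLp 2`
  set ψ : PiLp 2 (fun _ : Fin n → Bool => H) := (WithLp.equiv 2 _).symm v with hψdef
  set g : Fin (N+1) → PiLp 2 (fun _ : Fin n → Bool => H) :=
    fun i => (WithLp.equiv 2 _).symm fun x => ∑ z ∈ L i, b i z x • w i z with hg
  have hψapp : ∀ x, ψ x = v x := fun _ => rfl
  have hgapp : ∀ i x, g i x = ∑ z ∈ L i, b i z x • w i z := fun _ _ => rfl
  -- ⟪ψ, g i⟫ = A i
  have hψg : ∀ i, (inner ℂ ψ (g i) : ℂ) = (A i : ℝ) := by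
    intro i
    rw [PiLp.inner_apply]
    simp_rw [hψapp, hgapp, inner_sum, inner_smul_right]
    rw [Finset.sum_comm]
    have e2 : ∀ z ∈ L i, (∑ x : Fin n → Bool, b i z x * (inner ℂ (v x) (w i z) : ℂ))
        = ((‖w i z‖^2 : ℝ) : ℂ) := by
      intro z _
      rw [← hwin i z (w i z), inner_self_eq_norm_sq_to_K]
      norm_cast
    rw [Finset.sum_congr rfl e2]
    rw [hA]
    norm_cast
  -- ⟪g j, g k⟫ expansion
  have hgg : ∀ j k, (inner ℂ (g j) (g k) : ℂ)
      = ∑ z ∈ L j, ∑ y ∈ L k,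
          (∑ x : Fin n → Bool, starRingEnd ℂ (b j z x) * b k y x) * inner ℂ (w j z) (w k y) := by
    intro j k
    rw [PiLp.inner_apply]
    simp_rw [hgapp, inner_sum_smul_sum_smul]
    rw [Finset.sum_comm]
    refine Finset.sum_congr rfl fun z _ => ?_
    rw [Finset.sum_comm]
    exact Finset.sum_congr rfl fun y _ => (Finset.sum_mul _ _ _).symm
  -- diagonal terms
  have hgdiag : ∀ i, (inner ℂ (g i) (g i) : ℂ) = (A i : ℝ) := by
    intro i
    rw [hgg]
    have e : ∀ z ∈ L i, (∑ y ∈ L i,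
        (∑ x : Fin n → Bool, starRingEnd ℂ (b i z x) * b i y x) * (inner ℂ (w i z) (w i y) : ℂ))
        = ((‖w i z‖^2 : ℝ) : ℂ) := by
      intro z hz
      have : ∀ y ∈ L i, (∑ x : Fin n → Bool, starRingEnd ℂ (b i z x) * b i y x)
          * (inner ℂ (w i z) (w i y) : ℂ)
          = (if z = y then 1 else 0) * (inner ℂ (w i z) (w i y) : ℂ) := by
        intro y _
        rw [horth i z y]
      rw [Finset.sum_congr rfl this]
      simp only [ite_mul, one_mul, zero_mul]
      rw [Finset.sum_ite_eq, if_pos hz, inner_self_eq_norm_sq_to_K]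
      norm_cast
    rw [Finset.sum_congr rfl e, hA]
    norm_cast
  -- Cauchy–Schwarz over the index sets
  have hsum1 : ∀ i : Fin (N+1), (∑ z ∈ L i, ‖w i z‖) ≤ Real.sqrt (L i).card := by
    intro i
    rw [Real.le_sqrt (Finset.sum_nonneg fun z _ => norm_nonneg _) (Nat.cast_nonneg _)]
    calc (∑ z ∈ L i, ‖w i z‖)^2 ≤ (L i).card * ∑ z ∈ L i, ‖w i z‖^2 :=
          sq_sum_le_card_mul_sum_sq
      _ ≤ (L i).card * 1 := by
          have := hA1 i
          rw [hA] at this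
          exact mul_le_mul_of_nonneg_left this (Nat.cast_nonneg _)
      _ = (L i).card := mul_one _
  -- off-diagonal bound
  have hgoff : ∀ j k, j ≠ k → ‖(inner ℂ (g j) (g k) : ℂ)‖ ≤ τ j k := by
    intro j k hjk
    rw [hgg]
    have hc : ∀ z y, ‖(∑ x : Fin n → Bool, starRingEnd ℂ (b j z x) * b k y x : ℂ)‖
        = Real.sqrt (((2:ℝ)^n)⁻¹) := by
      intro z y
      rw [← Real.sqrt_sq (norm_nonneg _), hmub j k hjk z y]
    calc ‖∑ z ∈ L j, ∑ y ∈ L k,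
            (∑ x : Fin n → Bool, starRingEnd ℂ (b j z x) * b k y x) * (inner ℂ (w j z) (w k y) : ℂ)‖
        ≤ ∑ z ∈ L j, ∑ y ∈ L k,
            ‖(∑ x : Fin n → Bool, starRingEnd ℂ (b j z x) * b k y x) * (inner ℂ (w j z) (w k y) : ℂ)‖ :=
          (norm_sum_le _ _).trans (Finset.sum_le_sum fun z _ => norm_sum_le _ _)
      _ ≤ ∑ z ∈ L j, ∑ y ∈ L k, Real.sqrt (((2:ℝ)^n)⁻¹) * (‖w j z‖ * ‖w k y‖) := by
          refine Finset.sum_le_sum fun z _ => Finset.sum_le_sum fun y _ => ?_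
          rw [norm_mul, hc z y]
          exact mul_le_mul_of_nonneg_left (norm_inner_le_norm _ _) (Real.sqrt_nonneg _)
      _ = Real.sqrt (((2:ℝ)^n)⁻¹) * ((∑ z ∈ L j, ‖w j z‖) * (∑ y ∈ L k, ‖w k y‖)) := by
          rw [Finset.sum_mul_sum, Finset.mul_sum]
          exact Finset.sum_congr rfl fun z _ => by rw [Finset.mul_sum]
      _ ≤ Real.sqrt (((2:ℝ)^n)⁻¹) * (Real.sqrt (L j).card * Real.sqrt (L k).card) := by
          refine mul_le_mul_of_nonneg_left ?_ (Real.sqrt_nonneg _)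
          exact mul_le_mul (hsum1 j) (hsum1 k)
            (Finset.sum_nonneg fun z _ => norm_nonneg _) (Real.sqrt_nonneg _)
      _ = τ j k := by
          rw [hτ]
          dsimp only
          rw [Real.sqrt_mul (mul_nonneg (inv_nonneg.mpr (pow_nonneg zero_le_two n)) (Nat.cast_nonneg _)),
            Real.sqrt_mul (inv_nonneg.mpr (pow_nonneg zero_le_two n)), mul_assoc]
  -- the sum vector
  set u : PiLp 2 (fun _ : Fin n → Bool => H) := ∑ i, g i with hu
  have hψnorm : ‖ψ‖ = 1 := by
    have h1 : (inner ℂ ψ ψ : ℂ) = 1 := by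
      rw [PiLp.inner_apply]
      simp_rw [hψapp, inner_self_eq_norm_sq_to_K]
      norm_cast
      rw [hv]
      norm_num
    have h2 := inner_self_eq_norm_sq (𝕜 := ℂ) ψ
    rw [h1] at h2
    simp only [RCLike.one_re] at h2
    nlinarith [norm_nonneg ψ]
  have hs0 : 0 ≤ ∑ i, A i := Finset.sum_nonneg fun i _ => hA0 i
  have hsu : (∑ i, A i) ≤ ‖u‖ := by
    have h1 : ‖(inner ℂ ψ u : ℂ)‖ ≤ ‖ψ‖ * ‖u‖ := norm_inner_le_norm _ _
    have h2 : (inner ℂ ψ u : ℂ) = ((∑ i, A i : ℝ) : ℂ) := by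
      rw [hu, inner_sum]
      rw [Finset.sum_congr rfl fun i _ => hψg i]
      push_cast
      rfl
    rw [h2, hψnorm, one_mul] at h1
    calc (∑ i, A i) ≤ |∑ i, A i| := le_abs_self _
      _ = ‖((∑ i, A i : ℝ) : ℂ)‖ := by rw [Complex.norm_real, Real.norm_eq_abs]
      _ ≤ ‖u‖ := h1
  -- the pair quantities
  set T : ℝ := ∑ j : Fin (N+1), ∑ k : Fin (N+1), (if j < k then τ j k else 0) with hT
  set P : ℝ := ∑ j : Fin (N+1), ∑ k : Fin (N+1), (if j < k then (τ j k)^2 else 0) with hP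
  have hτnn : ∀ j k, 0 ≤ τ j k := fun j k => Real.sqrt_nonneg _
  have hTnn : 0 ≤ T := Finset.sum_nonneg fun j _ => Finset.sum_nonneg fun k _ => by
    split_ifs with h
    · exact hτnn j k
    · exact le_rfl
  have hPnn : 0 ≤ P := Finset.sum_nonneg fun j _ => Finset.sum_nonneg fun k _ => by
    split_ifs with h
    · exact sq_nonneg _
    · exact le_rfl
  have hτsymm : ∀ j k, τ j k = τ k j := by
    intro j k
    rw [hτ]
    dsimp only
    congr 1
    ring
  -- bound on ‖u‖²
  have huu : ‖u‖^2 ≤ (∑ i, A i) + 2 * T := by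
    have h0 : (inner ℂ u u : ℂ) = ∑ j : Fin (N+1), ∑ k : Fin (N+1), (inner ℂ (g j) (g k) : ℂ) := by
      rw [hu, sum_inner]
      exact Finset.sum_congr rfl fun j _ => inner_sum _ _ _
    have h2 := inner_self_eq_norm_sq (𝕜 := ℂ) u
    rw [h0] at h2
    have h1 : ‖u‖^2 = ∑ j : Fin (N+1), ∑ k : Fin (N+1), (inner ℂ (g j) (g k) : ℂ).re := by
      rw [← h2, RCLike.re_to_complex, Complex.re_sum]
      exact Finset.sum_congr rfl fun j _ => Complex.re_sum _ _
    rw [h1]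
    have hterm : ∀ j k : Fin (N+1), (inner ℂ (g j) (g k) : ℂ).re
        ≤ if j = k then A j else τ j k := by
      intro j k
      split_ifs with h
      · subst h
        rw [hgdiag]
        simp
      · calc (inner ℂ (g j) (g k) : ℂ).re ≤ |(inner ℂ (g j) (g k) : ℂ).re| := le_abs_self _
          _ ≤ ‖(inner ℂ (g j) (g k) : ℂ)‖ := Complex.abs_re_le_norm _
          _ ≤ τ j k := hgoff j k h
    calc ∑ j : Fin (N+1), ∑ k : Fin (N+1), (inner ℂ (g j) (g k) : ℂ).re
        ≤ ∑ j : Fin (N+1), ∑ k : Fin (N+1), (if j = k then A j else τ j k) :=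
          Finset.sum_le_sum fun j _ => Finset.sum_le_sum fun k _ => hterm j k
      _ = (∑ i, A i) + 2 * T := by
          have hpt : ∀ j k : Fin (N+1), (if j = k then A j else τ j k)
              = (if j = k then A j else 0) + ((if j < k then τ j k else 0)
                + (if k < j then τ j k else 0)) := by
            intro j k
            rcases lt_trichotomy j k with h|h|h
            · simp [ne_of_lt h, h, lt_asymm h]
            · simp [h]
            · simp [(ne_of_gt h : j ≠ k), lt_asymm h, h]
          simp_rw [hpt, Finset.sum_add_distrib]
          have e1 : ∑ j : Fin (N+1), ∑ k : Fin (N+1), (if j = k then A j else 0) = ∑ i, A i :=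
            Finset.sum_congr rfl fun j _ => by simp
          have e3 : ∑ j : Fin (N+1), ∑ k : Fin (N+1), (if k < j then τ j k else 0)
              = ∑ j : Fin (N+1), ∑ k : Fin (N+1), (if j < k then τ j k else 0) := by
            rw [Finset.sum_comm]
            refine Finset.sum_congr rfl fun k _ => Finset.sum_congr rfl fun j _ => ?_
            split_ifs with h
            · exact hτsymm j k
            · rfl
          rw [e1, e3, ← hT]
          ring
  -- key quadratic inequality
  have hkey : (∑ i, A i)^2 ≤ (∑ i, A i) + 2 * T := by
    calc (∑ i, A i)^2 ≤ ‖u‖^2 := pow_le_pow_left₀ hs0 hsu 2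
      _ ≤ _ := huu
  -- identify the right-hand side
  have hRHS : ∑ j : Fin (N+1), ∑ k : Fin (N+1),
      (if j < k then (1 + τ j k)^2 else 0)
      = (((N+1).choose 2 : ℕ) : ℝ) + 2*T + P := by
    have hpt : ∀ j k : Fin (N+1), (if j < k then (1 + τ j k)^2 else 0)
        = (if j < k then (1:ℝ) else 0) + (2 * (if j < k then τ j k else 0)
          + (if j < k then (τ j k)^2 else 0)) := by
      intro j k
      split_ifs
      · ring
      · ring
    simp_rw [hpt, Finset.sum_add_distrib, ← Finset.mul_sum]
    rw [count_pairs_fin (N+1), ← hT, ← hP]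
    ring
  rw [hRHS]
  have hgoalL : (∑ i : Fin (N+1), ∑ z ∈ L i, ‖w i z‖^2) = ∑ i, A i :=
    Finset.sum_congr rfl fun i _ => hAfold i
  rw [hgoalL]
  nlinarith [hkey, sq_nonneg ((∑ i, A i) - 1), hPnn, hTnn]
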